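/- Let F be a sparseness measure with cost function J on ℝⁿ, let A be an m×n real matrix, let k ≥ 1, and let σmax > 0 be such that ‖A u‖ ≤ σmax‖u‖ for every u ∈ ℝⁿ. If for some d with 0 < d < 1/2 the matrix A satisfies RRC at sparsity k for J with constant C = 2(1−2d)/(d σmax), then every linear subspace ν' of ℝⁿ with dim ν' = dim(ker A) and ‖P_{ker A} − P_{ν'}‖ ≤ d satisfies NSP at sparsity k for J. -/

import Mathlib

noncomputable section

/-- `F : ℝ → ℝ` is a sparseness measure: nonnegative on `[0,∞)`,
vanishing exactly at `0`, and `F (|·|)` is subadditive on `ℝ`. -/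
def SparsenessMeasure (F : ℝ → ℝ) : Prop :=
  (∀ t : ℝ, 0 ≤ t → 0 ≤ F t) ∧
  (∀ t : ℝ, 0 ≤ t → (F t = 0 ↔ t = 0)) ∧
  (∀ x y : ℝ, F |x + y| ≤ F |x| + F |y|)

/-- The cost function `J(x) = ∑ i, F |x i|` on `ℝⁿ`. -/
def costJ {n : ℕ} (F : ℝ → ℝ) (x : EuclideanSpace ℝ (Fin n)) : ℝ :=
  ∑ i, F |x i|

/-- The restricted cost `J(x_T) = ∑ i ∈ T, F |x i|`. -/
def costJT {n : ℕ} (F : ℝ → ℝ) (T : Finset (Fin n)) (x : EuclideanSpace ℝ (Fin n)) : ℝ :=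
  ∑ i ∈ T, F |x i|

/-- `x` has at most `k` nonzero entries. -/
def Sparse {n : ℕ} (k : ℕ) (x : EuclideanSpace ℝ (Fin n)) : Prop :=
  ∃ T : Finset (Fin n), T.card ≤ k ∧ ∀ i ∉ T, x i = 0

/-- The matrix `A` acting as a continuous linear map between Euclidean spaces. -/
def mulVecCLM {m n : ℕ} (A : Matrix (Fin m) (Fin n) ℝ) :
    EuclideanSpace ℝ (Fin n) →L[ℝ] EuclideanSpace ℝ (Fin m) :=
  (((EuclideanSpace.equiv (Fin m) ℝ).symm : (Fin m → ℝ) →L[ℝ] EuclideanSpace ℝ (Fin m)).comp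
    (Matrix.mulVecLin A).toContinuousLinearMap).comp
    ((EuclideanSpace.equiv (Fin n) ℝ) : EuclideanSpace ℝ (Fin n) →L[ℝ] (Fin n → ℝ))

/-- `A` satisfies the robust recovery condition at sparsity `k` for the cost `J_F`
with constant `C`: for every `k`-sparse `x̄`, every `ε > 0`, every noise `v` with
`‖v‖ ≤ ε`, and every feasible `x̂` with `J(x̂) ≤ J(x̄)`, one has `‖x̄ - x̂‖ ≤ C ε`. -/
def RRC {m n : ℕ} (A : Matrix (Fin m) (Fin n) ℝ) (k : ℕ) (F : ℝ → ℝ) (C : ℝ) : Prop :=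
  ∀ xbar : EuclideanSpace ℝ (Fin n), Sparse k xbar →
    ∀ ε : ℝ, 0 < ε →
      ∀ v : EuclideanSpace ℝ (Fin m), ‖v‖ ≤ ε →
        ∀ xhat : EuclideanSpace ℝ (Fin n),
          ‖mulVecCLM A xhat - (mulVecCLM A xbar + v)‖ ≤ ε →
            costJ F xhat ≤ costJ F xbar → ‖xbar - xhat‖ ≤ C * ε

/-- The robust null space condition with parameter `d` for `(A, k, J_F)`. -/
def RNSP {m n : ℕ} (A : Matrix (Fin m) (Fin n) ℝ) (k : ℕ) (F : ℝ → ℝ) (d : ℝ) : Prop :=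
  ∀ z ∈ LinearMap.ker (mulVecCLM A : EuclideanSpace ℝ (Fin n) →ₗ[ℝ] EuclideanSpace ℝ (Fin m)), z ≠ 0 →
    ∀ η : EuclideanSpace ℝ (Fin n), ‖η‖ < d * ‖z‖ →
      ∀ T : Finset (Fin n), T.card ≤ k →
        costJT F T (z + η) < costJT F Tᶜ (z + η)

/-- The subspace `ν` satisfies the null space property at sparsity `k` for `J_F`. -/
def NSP {n : ℕ} (ν : Submodule ℝ (EuclideanSpace ℝ (Fin n))) (k : ℕ) (F : ℝ → ℝ) : Prop :=
  ∀ z ∈ ν, z ≠ 0 → ∀ T : Finset (Fin n), T.card ≤ k → costJT F T z < costJT F Tᶜ z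

/-- The orthogonal projection onto `ν`, as a continuous linear map `ℝⁿ → ℝⁿ`. -/
def projCLM {n : ℕ} (ν : Submodule ℝ (EuclideanSpace ℝ (Fin n))) :
    EuclideanSpace ℝ (Fin n) →L[ℝ] EuclideanSpace ℝ (Fin n) :=
  ν.subtypeL.comp (ν.orthogonalProjectionOnto)

set_option maxHeartbeats 800000 in
/-- converse part of Theorem 3: if `‖A u‖ ≤ σmax ‖u‖` for all `u`,
`0 < d < 1/2`, and `A` satisfies RRC at sparsity `k` for `J` with constant
`C = 2(1−2d)/(d σmax)`, then every subspace `ν'` with `dim ν' = dim (ker A)` and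
`‖P_{ker A} − P_{ν'}‖ ≤ d` satisfies NSP at sparsity `k` for `J`. -/
theorem stmt5 {m n : ℕ} (F : ℝ → ℝ) (hF : SparsenessMeasure F)
    (A : Matrix (Fin m) (Fin n) ℝ) (k : ℕ) (hk : 1 ≤ k)
    (σmax : ℝ) (hσ : 0 < σmax)
    (hσA : ∀ u : EuclideanSpace ℝ (Fin n), ‖mulVecCLM A u‖ ≤ σmax * ‖u‖)
    (d : ℝ) (hd0 : 0 < d) (hd1 : d < 1/2)
    (hrrc : RRC A k F (2 * (1 - 2*d) / (d * σmax))) :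
    ∀ ν' : Submodule ℝ (EuclideanSpace ℝ (Fin n)),
      Module.finrank ℝ ν' = Module.finrank ℝ (LinearMap.ker (mulVecCLM A : EuclideanSpace ℝ (Fin n) →ₗ[ℝ] EuclideanSpace ℝ (Fin m))) →
      ‖projCLM (LinearMap.ker (mulVecCLM A : EuclideanSpace ℝ (Fin n) →ₗ[ℝ] EuclideanSpace ℝ (Fin m))) - projCLM ν'‖ ≤ d →
      NSP ν' k F := by
  intro ν' _hdim hproj z hz hz0 T hT
  by_contra hcon
  push_neg at hcon
  have hzpos : 0 < ‖z‖ := norm_pos_iff.mpr hz0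
  have hF0 : F 0 = 0 := (hF.2.1 0 le_rfl).mpr rfl
  set K := LinearMap.ker (mulVecCLM A : EuclideanSpace ℝ (Fin n) →ₗ[ℝ] EuclideanSpace ℝ (Fin m)) with hK
  set w : EuclideanSpace ℝ (Fin n) := projCLM K z with hw
  have hwK : w ∈ K := (K.orthogonalProjectionOnto z).2
  have hAw : mulVecCLM A w = 0 := hwK
  set η : EuclideanSpace ℝ (Fin n) := z - w with hη
  have hprojν : projCLM ν' z = z := by
    exact Submodule.starProjection_eq_self_iff.mpr hz
  have hηeq : η = (projCLM ν' - projCLM K) z := by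
    simp [hη, hprojν, hw]
  have hηle : ‖η‖ ≤ d * ‖z‖ := by
    calc ‖η‖ = ‖(projCLM ν' - projCLM K) z‖ := by rw [hηeq]
    _ ≤ ‖projCLM ν' - projCLM K‖ * ‖z‖ := (projCLM ν' - projCLM K).le_opNorm z
    _ = ‖projCLM K - projCLM ν'‖ * ‖z‖ := by rw [norm_sub_rev]
    _ ≤ d * ‖z‖ := mul_le_mul_of_nonneg_right hproj (norm_nonneg _)
  set ε : ℝ := σmax * d * ‖z‖ / 2 with hε
  have hεpos : 0 < ε := by positivity
  set xbar : EuclideanSpace ℝ (Fin n) := WithLp.toLp 2 (fun i => if i ∈ T then z i else 0) with hxbar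
  set xhat : EuclideanSpace ℝ (Fin n) := WithLp.toLp 2 (fun i => if i ∈ T then 0 else -(z i)) with hxhat
  have hsub : xbar - xhat = z := by
    ext i
    show xbar i - xhat i = z i
    by_cases h : i ∈ T <;> simp [hxbar, hxhat, h]
  have hsparse : Sparse k xbar := ⟨T, hT, fun i hi => by simp [hxbar, hi]⟩
  set v : EuclideanSpace ℝ (Fin m) := -((2:ℝ)⁻¹ • mulVecCLM A η) with hv
  have hAη : ‖mulVecCLM A η‖ ≤ σmax * d * ‖z‖ := by
    rw [mul_assoc]
    exact le_trans (hσA η) (mul_le_mul_of_nonneg_left hηle hσ.le)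
  have hvle : ‖v‖ ≤ ε := by
    have : ‖v‖ = 2⁻¹ * ‖mulVecCLM A η‖ := by
      rw [hv, norm_neg, norm_smul]
      norm_num
    rw [this, hε]
    linarith [hAη]
  have hAz : mulVecCLM A z = mulVecCLM A η := by
    have : z = η + w := by rw [hη]; abel
    rw [this, map_add, hAw, add_zero]
  have hres : ‖mulVecCLM A xhat - (mulVecCLM A xbar + v)‖ ≤ ε := by
    have h1 : mulVecCLM A xhat - (mulVecCLM A xbar + v)
        = -((2:ℝ)⁻¹ • mulVecCLM A η) := by
      have h2 : mulVecCLM A xhat - mulVecCLM A xbar = -(mulVecCLM A η) := by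
        rw [← map_sub, ← hAz, ← map_neg, ← hsub]
        congr 1
        abel
      rw [hv, sub_add_eq_sub_sub, h2]
      module
    rw [h1, norm_neg, norm_smul]
    have : ‖(2:ℝ)⁻¹‖ = 2⁻¹ := by norm_num
    rw [this, hε]
    linarith [hAη]
  have hcost_bar : costJ F xbar = costJT F T z := by
    unfold costJ costJT
    rw [← Finset.univ_inter T, ← Finset.sum_ite_mem]
    refine Finset.sum_congr rfl fun i _ => ?_
    by_cases h : i ∈ T <;> simp [hxbar, h, hF0]
  have hcost_hat : costJ F xhat = costJT F Tᶜ z := by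
    unfold costJ costJT
    rw [← Finset.univ_inter Tᶜ, ← Finset.sum_ite_mem]
    refine Finset.sum_congr rfl fun i _ => ?_
    by_cases h : i ∈ T <;> simp [hxhat, h, hF0]
  have hcost : costJ F xhat ≤ costJ F xbar := by
    rw [hcost_bar, hcost_hat]; exact hcon
  have hfinal := hrrc xbar hsparse ε hεpos v hvle xhat hres hcost
  rw [hsub] at hfinal
  have hCε : 2 * (1 - 2*d) / (d * σmax) * ε = (1 - 2*d) * ‖z‖ := by
    rw [hε]
    field_simp
  rw [hCε] at hfinal
  nlinarith
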